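/- Let s, L, l1, l2, k be integers with l2 < l1 and L ≥ 2, and consider the points B1 = (l2, s − l2), B2 = (l1, s − l1) and C = (k, s + L − k) in ℤ×ℤ. Let w and p be binary words of length L such that the lattice path of w from B1 ends at C and the lattice path of p from B2 ends at C. Suppose that the paths P_{B1}(w) and P_{B2}(p) have only the point C in common, and that the paths P_{B2}(p) and P_{B2}(w) have only the point B2 in common. Then w begins and ends with the letter a (w = a z a for some possibly empty word z) and p begins and ends with the letter b (p = b z' b for some possibly empty word z'). -/
import Mathlib


/-- The point of the lattice path of the binary word `w` started at `A` after
`t` steps: `A + (|w_t|_a, |w_t|_b)` where `w_t` is the prefix of `w` of length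
`t`.  The alphabet `{a, b}` is encoded by `Bool` with `a = true`, `b = false`. -/
def pathPt (A : ℤ × ℤ) (w : List Bool) (t : ℕ) : ℤ × ℤ :=
  (A.1 + ((w.take t).count true : ℤ), A.2 + ((w.take t).count false : ℤ))

/-- `P` is a common point of the lattice path of `w` from `A` and the lattice
path of `p` from `B`. -/
def CommonPt (A B : ℤ × ℤ) (w p : List Bool) (P : ℤ × ℤ) : Prop :=
  (∃ t ≤ w.length, pathPt A w t = P) ∧ (∃ t ≤ p.length, pathPt B p t = P)

lemma count_tf (l : List Bool) : l.count true + l.count false = l.length := by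
  induction l with
  | nil => simp
  | cons x xs ih => cases x <;> simp [List.count_cons] <;> omega

lemma count_take_succ (l : List Bool) (t : ℕ) (ht : t < l.length) :
    (l.take (t+1)).count true = (l.take t).count true + (if l.getD t false then 1 else 0) := by
  rw [List.take_succ]
  simp only [List.getElem?_eq_getElem ht, List.count_append]
  rw [← List.getD_eq_getElem l false ht]
  cases h : l.getD t false <;> simp [h]

lemma ends_of (c : Bool) (w : List Bool) (h2 : 2 ≤ w.length)
    (h0 : w.getD 0 false = c) (h1 : w.getD (w.length - 1) false = c) :
    ∃ z, w = c :: z ++ [c] := by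
  cases w with
  | nil => simp at h2
  | cons x rest =>
    have hr : rest ≠ [] := by
      cases rest
      · simp at h2
      · simp
    refine ⟨rest.dropLast, ?_⟩
    have hlast : rest.getLast hr = c := by
      rw [List.getLast_eq_getElem]
      cases rest with
      | nil => exact absurd rfl hr
      | cons y ys =>
        have := h1
        simp [List.getD] at this ⊢
        exact this
    have hdl : rest = rest.dropLast ++ [rest.getLast hr] := (List.dropLast_append_getLast hr).symm
    simp [List.getD] at h0
    rw [h0, List.cons_append]
    congr 1
    rw [hlast] at hdl
    exact hdl

theorem stmt_10 (s l1 l2 k : ℤ) (L : ℕ) (hl : l2 < l1) (hL : 2 ≤ L)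
    (B1 B2 C : ℤ × ℤ)
    (hB1 : B1 = (l2, s - l2)) (hB2 : B2 = (l1, s - l1)) (hC : C = (k, s + L - k))
    (w p : List Bool) (hwL : w.length = L) (hpL : p.length = L)
    (hwC : pathPt B1 w L = C) (hpC : pathPt B2 p L = C)
    (honly1 : ∀ P, CommonPt B1 B2 w p P → P = C)
    (honly2 : ∀ P, CommonPt B2 B2 p w P → P = B2) :
    (∃ z : List Bool, w = true :: z ++ [true]) ∧
    (∃ z' : List Bool, p = false :: z' ++ [false]) := by
  subst hB1 hB2 hC
  -- count false + count true = t on prefixes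
  have hwt : ∀ t, t ≤ L → (w.take t).count true + (w.take t).count false = t := by
    intro t ht
    rw [count_tf, List.length_take]; omega
  have hpt : ∀ t, t ≤ L → (p.take t).count true + (p.take t).count false = t := by
    intro t ht
    rw [count_tf, List.length_take]; omega
  -- endpoint counts
  have hwk : l2 + ((w.take L).count true : ℤ) = k := by
    have := congrArg Prod.fst hwC
    simpa [pathPt] using this
  have hpk : l1 + ((p.take L).count true : ℤ) = k := by
    have := congrArg Prod.fst hpC
    simpa [pathPt] using this
  -- step bounds
  have stepw : ∀ t, t < L → (w.take (t+1)).count true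
      = (w.take t).count true + (if w.getD t false then 1 else 0) := by
    intro t ht; exact count_take_succ w t (by omega)
  have stepp : ∀ t, t < L → (p.take (t+1)).count true
      = (p.take t).count true + (if p.getD t false then 1 else 0) := by
    intro t ht; exact count_take_succ p t (by omega)
  have stepw' : ∀ t, t < L → (w.take t).count true ≤ (w.take (t+1)).count true ∧
      (w.take (t+1)).count true ≤ (w.take t).count true + 1 := by
    intro t ht; rw [stepw t ht]; split <;> omega
  have stepp' : ∀ t, t < L → (p.take t).count true ≤ (p.take (t+1)).count true ∧
      (p.take (t+1)).count true ≤ (p.take t).count true + 1 := by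
    intro t ht; rw [stepp t ht]; split <;> omega
  -- Lemma A: interior x-coordinates never coincide (paths from B1 and B2)
  have hA : ∀ t, t < L →
      l1 + ((p.take t).count true : ℤ) ≠ l2 + ((w.take t).count true : ℤ) := by
    intro t ht heq
    have hPeq : pathPt (l1, s - l1) p t = pathPt (l2, s - l2) w t := by
      have h1 := hwt t (by omega)
      have h2 := hpt t (by omega)
      simp only [pathPt, Prod.mk.injEq]
      constructor <;> omega
    have hcom := honly1 (pathPt (l2, s - l2) w t) ⟨⟨t, by omega, rfl⟩, ⟨t, by omega, hPeq⟩⟩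
    have h1 := congrArg Prod.fst hcom
    have h2 := congrArg Prod.snd hcom
    simp only [pathPt] at h1 h2
    have h3 := hwt t (by omega)
    omega
  -- Lemma B: counts of p and w never coincide at positive times (paths from B2)
  have hB : ∀ t, 0 < t → t ≤ L →
      ((p.take t).count true : ℤ) ≠ ((w.take t).count true : ℤ) := by
    intro t ht0 htL heq
    have hPeq : pathPt (l1, s - l1) p t = pathPt (l1, s - l1) w t := by
      have h1 := hwt t htL
      have h2 := hpt t htL
      simp only [pathPt, Prod.mk.injEq]
      constructor <;> omega
    have hcom := honly2 (pathPt (l1, s - l1) p t) ⟨⟨t, by omega, rfl⟩, ⟨t, by omega, hPeq.symm⟩⟩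
    have h1 := congrArg Prod.fst hcom
    have h2 := congrArg Prod.snd hcom
    simp only [pathPt] at h1 h2
    have h3 := hpt t htL
    omega
  -- positivity of the difference d(t) = (l1 + cp t) - (l2 + cw t) for t < L
  have hdpos : ∀ t, t < L →
      l2 + ((w.take t).count true : ℤ) < l1 + ((p.take t).count true : ℤ) := by
    intro t
    induction t with
    | zero => intro _; simpa using hl
    | succ n ih =>
      intro h
      have hn := ih (by omega)
      have hb1 := stepw' n (by omega)
      have hb2 := stepp' n (by omega)
      have hne := hA (n+1) h
      omega
  -- last letters
  have hL1 : L - 1 + 1 = L := by omega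
  have hlast := hdpos (L-1) (by omega)
  have hbw := stepw (L-1) (by omega)
  have hbp := stepp (L-1) (by omega)
  rw [hL1] at hbw hbp
  have hwlast : w.getD (L-1) false = true := by
    cases hwl : w.getD (L-1) false
    · rw [hwl] at hbw; simp at hbw
      cases hpl : p.getD (L-1) false <;> rw [hpl] at hbp <;> simp at hbp <;> omega
    · rfl
  have hplast : p.getD (L-1) false = false := by
    cases hpl : p.getD (L-1) false
    · rfl
    · rw [hpl] at hbp; simp at hbp
      rw [hwlast] at hbw; simp at hbw
      omega
  -- first letters
  have hbw0 := stepw 0 (by omega)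
  have hbp0 := stepp 0 (by omega)
  simp only [List.take_zero, List.count_nil, Nat.zero_add] at hbw0 hbp0
  have hwfirst : w.getD 0 false = true := by
    cases hw0 : w.getD 0 false
    · -- w starts with b; then p starts with a and stays strictly above, contradiction at L
      exfalso
      rw [hw0] at hbw0; simp at hbw0
      have hp0 : p.getD 0 false = true := by
        cases hp0 : p.getD 0 false
        · exfalso
          rw [hp0] at hbp0; simp at hbp0
          have := hB 1 (by omega) (by omega)
          omega
        · rfl
      rw [hp0] at hbp0; simp at hbp0
      have hepos : ∀ t, t ≤ L → 1 ≤ t →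
          ((w.take t).count true : ℤ) < ((p.take t).count true : ℤ) := by
        intro t
        induction t with
        | zero => omega
        | succ n ih =>
          intro hle h1
          by_cases hn : n = 0
          · subst hn
            rw [hbp0, hbw0]
            norm_num
          · have hih := ih (by omega) (by omega)
            have hb1 := stepw' n (by omega)
            have hb2 := stepp' n (by omega)
            have hne := hB (n+1) (by omega) hle
            omega
      have := hepos L (le_refl L) (by omega)
      omega
    · rfl
  have hpfirst : p.getD 0 false = false := by
    cases hp0 : p.getD 0 false
    · rfl
    · exfalso
      rw [hwfirst] at hbw0; rw [hp0] at hbp0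
      simp at hbw0 hbp0
      have := hB 1 (by omega) (by omega)
      omega
  constructor
  · exact ends_of true w (by omega) hwfirst (by rw [hwL]; exact hwlast)
  · exact ends_of false p (by omega) hpfirst (by rw [hpL]; exact hplast)
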